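/- Let f be an entire function, s₀ a complex number, r > 0 and M > 1 real, and suppose f(s₀) ≠ 0 and |f(s)/f(s₀)| < e^M for all s with |s - s₀| ≤ r. Then for every s with |s - s₀| ≤ r/4 where f(s) ≠ 0, |f'(s)/f(s) - Σ_{ρ : |ρ - s₀| ≤ r/2, f(ρ)=0} 1/(s - ρ)| ≤ C M / r for some absolute constant C, where zeros ρ are counted with multiplicity. -/

import Mathlib

open Metric Set

lemma diff_prod_aux (Z : Finset ℂ) (m : ℂ → ℕ) :
    Differentiable ℂ (fun z => ∏ ρ ∈ Z, (z - ρ) ^ (m ρ)) := by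
  classical
  induction Z using Finset.induction with
  | empty => simpa using differentiable_const (1 : ℂ)
  | insert _ _ h ih =>
    simp only [Finset.prod_insert h]
    exact (((differentiable_id).sub_const _).pow _).mul ih


/-- Primitive of a holomorphic function on a disk, via termwise integration
of the Taylor series. -/
lemma exists_primitive_aux {u : ℂ → ℂ} {c : ℂ} {R₂ R₃ Rb : ℝ}
    (hd : DifferentiableOn ℂ u (ball c Rb)) (h2 : 0 < R₂) (h23 : R₂ < R₃) (h3b : R₃ < Rb) :
    ∃ L : ℂ → ℂ, L c = 0 ∧ ∀ z ∈ ball c R₂, HasDerivAt L (u z) z := by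
  have h3 : 0 < R₃ := h2.trans h23
  set a : ℕ → ℂ := fun n => ((n).factorial : ℂ)⁻¹ * iteratedDeriv n u c with ha
  have hsum : ∀ z ∈ ball c Rb, HasSum (fun n => a n * (z - c) ^ n) (u z) := by
    intro z hz
    have h := Complex.hasSum_taylorSeries_on_ball hd hz
    convert h using 2 with n
    · rfl
    simp only [a, smul_eq_mul]; ring
  have hz₁ : c + (R₃ : ℂ) ∈ ball c Rb := by
    simp only [mem_ball, dist_eq_norm, add_sub_cancel_left, Complex.norm_real,
      Real.norm_eq_abs, abs_of_pos h3]
    exact h3b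
  have hsum1 : Summable (fun n => ‖a n‖ * R₃ ^ n) := by
    have := (hsum _ hz₁).summable.norm
    simpa [add_sub_cancel_left, norm_mul, norm_pow, Complex.norm_real,
      Real.norm_eq_abs, abs_of_pos h3] using this
  set C₀ : ℝ := ∑' n, ‖a n‖ * R₃ ^ n with hC₀
  have hcoef : ∀ n, ‖a n‖ * R₃ ^ n ≤ C₀ := fun n =>
    Summable.le_tsum hsum1 n fun m _ => by positivity
  set G : ℕ → ℂ → ℂ := fun n z => (a n / (n + 1)) * (z - c) ^ (n + 1) with hG
  have hGderiv : ∀ n z, HasDerivAt (G n) (a n * (z - c) ^ n) z := by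
    intro n z
    have h1 : HasDerivAt (fun w : ℂ => (w - c) ^ (n + 1))
        ((n + 1 : ℕ) * (z - c) ^ n * 1) z := by
      simpa using (((hasDerivAt_id z).sub_const c).fun_pow (n + 1))
    have h2 := h1.const_mul (a n / (n + 1))
    refine h2.congr_deriv ?_
    have : ((n : ℂ) + 1) ≠ 0 := Nat.cast_add_one_ne_zero n
    field_simp
    push_cast
    ring
  have hq : (0:ℝ) ≤ R₂ / R₃ := by positivity
  have hq1 : R₂ / R₃ < 1 := (div_lt_one h3).2 h23
  have husum : Summable (fun n => C₀ * (R₂ / R₃) ^ n) :=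
    (summable_geometric_of_lt_one hq hq1).mul_left C₀
  have hbound : ∀ n, ∀ y ∈ ball c R₂, ‖a n * (y - c) ^ n‖ ≤ C₀ * (R₂ / R₃) ^ n := by
    intro n y hy
    have hyc : ‖y - c‖ ≤ R₂ := by
      rw [mem_ball, dist_eq_norm] at hy; exact hy.le
    have h1 : ‖a n * (y - c) ^ n‖ ≤ ‖a n‖ * R₂ ^ n := by
      rw [norm_mul, norm_pow]
      exact mul_le_mul_of_nonneg_left (pow_le_pow_left₀ (norm_nonneg _) hyc n)
        (norm_nonneg _)
    have h2 : ‖a n‖ * R₂ ^ n = (‖a n‖ * R₃ ^ n) * (R₂ / R₃) ^ n := by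
      rw [div_pow]; field_simp
    have h3' : (‖a n‖ * R₃ ^ n) * (R₂ / R₃) ^ n ≤ C₀ * (R₂ / R₃) ^ n :=
      mul_le_mul_of_nonneg_right (hcoef n) (by positivity)
    linarith
  refine ⟨fun z => ∑' n, G n z, ?_, ?_⟩
  · have : ∀ n, G n c = 0 := by
      intro n; simp [hG, zero_pow (Nat.succ_ne_zero n)]
    simp [this]
  · intro z hz
    have hzb : z ∈ ball c Rb := ball_subset_ball (by linarith) hz
    have H := hasDerivAt_tsum_of_isPreconnected husum isOpen_ball
      (convex_ball c R₂).isPreconnected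
      (fun n y _ => hGderiv n y) (fun n y hy => hbound n y hy)
      (mem_ball_self h2)
      (by
        have : ∀ n, G n c = 0 := by
          intro n; simp [hG, zero_pow (Nat.succ_ne_zero n)]
        simp only [this]; exact summable_zero) hz
    rwa [(hsum z hzb).tsum_eq] at H


/-- Borel–Carathéodory-type bound via the Schwarz lemma. -/
lemma bc_bound_aux {L : ℂ → ℂ} {c : ℂ} {R M : ℝ} (hR : 0 < R) (hM : 0 < M)
    (hd : DifferentiableOn ℂ L (ball c R)) (h0 : L c = 0)
    (hre : ∀ z ∈ ball c R, (L z).re ≤ M) :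
    ∀ z ∈ ball c (3 / 4 * R), ‖L z‖ ≤ 12 * M := by
  set φ : ℂ → ℂ := fun z => L z / (((4 * M : ℝ) : ℂ) - L z) with hφ
  have hden : ∀ z ∈ ball c R, (((4 * M : ℝ) : ℂ) - L z) ≠ 0 := by
    intro z hz h
    have h1 : (((4 * M : ℝ) : ℂ) - L z).re = 0 := by rw [h]; simp
    rw [Complex.sub_re, Complex.ofReal_re] at h1
    have := hre z hz
    linarith
  have hφd : DifferentiableOn ℂ φ (ball c R) :=
    hd.div ((differentiableOn_const _).sub hd) hden
  have hφ0 : φ c = 0 := by simp [hφ, h0]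
  have hlt : ∀ z ∈ ball c R, ‖L z‖ < ‖((4 * M : ℝ) : ℂ) - L z‖ := by
    intro z hz
    have h1 : (L z).re ≤ M := hre z hz
    have e1 : ‖L z‖ ^ 2 = (L z).re ^ 2 + (L z).im ^ 2 := by
      rw [Complex.sq_norm, Complex.normSq_apply]; ring
    have e2 : ‖((4 * M : ℝ) : ℂ) - L z‖ ^ 2 = (4 * M - (L z).re) ^ 2 + (L z).im ^ 2 := by
      rw [Complex.sq_norm, Complex.normSq_apply,
        Complex.sub_re, Complex.sub_im, Complex.ofReal_re, Complex.ofReal_im]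
      ring
    have : ‖L z‖ ^ 2 < ‖((4 * M : ℝ) : ℂ) - L z‖ ^ 2 := by
      rw [e1, e2]; nlinarith
    exact lt_of_pow_lt_pow_left₀ 2 (norm_nonneg _) this
  have hmaps : MapsTo φ (ball c R) (ball (φ c) 1) := by
    intro z hz
    rw [hφ0, mem_ball_zero_iff, hφ, norm_div,
      div_lt_one (lt_of_le_of_lt (norm_nonneg _) (hlt z hz))]
    exact hlt z hz
  intro z hz
  have hzR : z ∈ ball c R := ball_subset_ball (by linarith) hz
  have hs := Complex.dist_le_div_mul_dist_of_mapsTo_ball hφd (hmaps.mono_right ball_subset_closedBall) hzR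
  rw [hφ0, dist_zero_right] at hs
  have hφz : ‖φ z‖ ≤ 3 / 4 := by
    have hdz : dist z c ≤ 3 / 4 * R := (mem_ball.1 hz).le
    calc ‖φ z‖ ≤ 1 / R * dist z c := hs
      _ ≤ 1 / R * (3 / 4 * R) := by
          apply mul_le_mul_of_nonneg_left hdz (by positivity)
      _ = 3 / 4 := by field_simp
  have key : φ z * (((4 * M : ℝ) : ℂ) - L z) = L z := by
    exact div_mul_cancel₀ _ (hden z hzR)
  have hLeq : L z * (1 + φ z) = ((4 * M : ℝ) : ℂ) * φ z := by
    linear_combination -key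
  have h1φ : (1 : ℝ) / 4 ≤ ‖(1 : ℂ) + φ z‖ := by
    have t := norm_add_le ((1 : ℂ) + φ z) (-φ z)
    simp only [add_neg_cancel_right, norm_one, norm_neg] at t
    linarith
  have hnorm : ‖L z‖ * ‖(1 : ℂ) + φ z‖ = (4 * M) * ‖φ z‖ := by
    have := congrArg norm hLeq
    rwa [norm_mul, norm_mul, Complex.norm_real, Real.norm_eq_abs,
      abs_of_pos (by linarith : (0:ℝ) < 4 * M)] at this
  have : ‖L z‖ * (1 / 4) ≤ 3 * M := by
    calc ‖L z‖ * (1 / 4) ≤ ‖L z‖ * ‖(1 : ℂ) + φ z‖ :=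
          mul_le_mul_of_nonneg_left h1φ (norm_nonneg _)
      _ = (4 * M) * ‖φ z‖ := hnorm
      _ ≤ (4 * M) * (3 / 4) := mul_le_mul_of_nonneg_left hφz (by linarith)
      _ = 3 * M := by ring
  linarith

/-- Ramachandra–Sankaranarayanan lemma (with `ε = 1/4`): there is an absolute constant `C`
such that if `f` is entire, `f(s₀) ≠ 0`, and `|f(s)/f(s₀)| < e^M` on `|s - s₀| ≤ r` with
`M > 1`, then for `|s - s₀| ≤ r/4` with `f(s) ≠ 0`,
`|f'(s)/f(s) - Σ_{|ρ - s₀| ≤ r/2, f(ρ)=0} m(ρ)/(s - ρ)| ≤ C·M/r`, where the zeros `ρ` are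
counted with their multiplicities `m(ρ)`. -/
theorem logDeriv_approx_by_zeros :
    ∃ C : ℝ, 0 < C ∧
      ∀ (f : ℂ → ℂ) (s₀ : ℂ) (r M : ℝ), Differentiable ℂ f → 0 < r → 1 < M →
        f s₀ ≠ 0 → (∀ s : ℂ, ‖s - s₀‖ ≤ r → ‖f s / f s₀‖ < Real.exp M) →
        ∀ (Z : Finset ℂ) (m : ℂ → ℕ),
          (∀ ρ : ℂ, ρ ∈ Z ↔ ‖ρ - s₀‖ ≤ r / 2 ∧ f ρ = 0) →
          (∀ ρ ∈ Z, ∃ g : ℂ → ℂ, AnalyticAt ℂ g ρ ∧ g ρ ≠ 0 ∧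
            ∀ z : ℂ, f z = (z - ρ) ^ (m ρ) * g z) →
          ∀ s : ℂ, ‖s - s₀‖ ≤ r / 4 → f s ≠ 0 →
            ‖logDeriv f s - ∑ ρ ∈ Z, (m ρ : ℂ) / (s - ρ)‖ ≤ C * M / r := by
  classical
  refine ⟨500, by norm_num, ?_⟩
  intro f s₀ r M hf hr hM1 hfs₀ hbound Z m hZ hfac s hs hfs
  have hM : (0:ℝ) < M := lt_trans one_pos hM1
  -- choice of local factorizations
  choose gg hgga hggn hggf using hfac
  -- the product of the zero factors
  set P : ℂ → ℂ := fun z => ∏ ρ ∈ Z, (z - ρ) ^ (m ρ) with hPdef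
  have hPd : Differentiable ℂ P := diff_prod_aux Z m
  -- multiplicities are positive on Z
  have hm1 : ∀ ρ (hρ : ρ ∈ Z), m ρ ≠ 0 := by
    intro ρ hρ h0
    have h1 := hggf ρ hρ ρ
    rw [h0, pow_zero, one_mul] at h1
    exact hggn ρ hρ (h1 ▸ ((hZ ρ).1 hρ).2)
  have hPne : ∀ z, z ∉ Z → P z ≠ 0 := by
    intro z hz
    rw [hPdef]
    rw [Finset.prod_ne_zero_iff]
    intro ρ hρ
    exact pow_ne_zero _ (sub_ne_zero.2 fun h => hz (h ▸ hρ))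
  have hs₀notZ : s₀ ∉ Z := fun h => hfs₀ ((hZ s₀).1 h).2
  -- the regular part g
  set g : ℂ → ℂ := fun z =>
    if hz : z ∈ Z then gg z hz z / ∏ ρ' ∈ Z.erase z, (z - ρ') ^ (m ρ')
    else f z / P z with hgdef
  have hfPg : ∀ z, f z = P z * g z := by
    intro z
    by_cases hz : z ∈ Z
    · have hfz : f z = 0 := ((hZ z).1 hz).2
      have hPz : P z = 0 :=
        Finset.prod_eq_zero hz (by simp [zero_pow (hm1 z hz)])
      simp [hfz, hPz]
    · simp only [hgdef, dif_neg hz]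
      field_simp [hPne z hz]
  have hgne : ∀ z, ‖z - s₀‖ ≤ r / 2 → g z ≠ 0 := by
    intro z hz
    by_cases hzZ : z ∈ Z
    · simp only [hgdef, dif_pos hzZ]
      apply div_ne_zero (hggn z hzZ)
      rw [Finset.prod_ne_zero_iff]
      intro ρ' hρ'
      exact pow_ne_zero _ (sub_ne_zero.2 fun h => (Finset.mem_erase.1 hρ').1 h.symm)
    · simp only [hgdef, dif_neg hzZ]
      refine div_ne_zero (fun h => hzZ ((hZ z).2 ⟨hz, h⟩)) (hPne z hzZ)
  have hgdiff : Differentiable ℂ g := by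
    intro z₀
    by_cases hz₀ : z₀ ∈ Z
    · set Q : ℂ → ℂ := fun z => ∏ ρ' ∈ Z.erase z₀, (z - ρ') ^ (m ρ') with hQdef
      have hQd : Differentiable ℂ Q := diff_prod_aux _ m
      have hQz₀ : Q z₀ ≠ 0 := by
        rw [hQdef, Finset.prod_ne_zero_iff]
        intro ρ' hρ'
        exact pow_ne_zero _ (sub_ne_zero.2 fun h => (Finset.mem_erase.1 hρ').1 h.symm)
      have hGdiff : DifferentiableAt ℂ (fun z => gg z₀ hz₀ z / Q z) z₀ :=
        ((hgga z₀ hz₀).differentiableAt).div (hQd z₀) hQz₀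
      apply hGdiff.congr_of_eventuallyEq
      have hop : ∀ᶠ z in nhds z₀, z ∉ (Z.erase z₀ : Finset ℂ) := by
        have hcl : IsClosed ((Z.erase z₀ : Finset ℂ) : Set ℂ) :=
          (Z.erase z₀).finite_toSet.isClosed
        have : z₀ ∈ (((Z.erase z₀ : Finset ℂ) : Set ℂ))ᶜ := by simp
        filter_upwards [hcl.isOpen_compl.mem_nhds this] with z hzc
        exact fun hmem => hzc (Finset.mem_coe.2 hmem)
      filter_upwards [hop] with z hzne
      by_cases hzZ : z ∈ Z
      · have hzz : z = z₀ := by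
          by_contra h
          exact hzne (Finset.mem_erase.2 ⟨h, hzZ⟩)
        subst hzz
        simp only [hgdef, dif_pos hzZ]
        rfl
      · have hzz₀ : z ≠ z₀ := fun h => hzZ (h ▸ hz₀)
        simp only [hgdef, dif_neg hzZ]
        have hPfac : P z = (z - z₀) ^ (m z₀) * Q z :=
          (Finset.mul_prod_erase Z _ hz₀).symm
        have hffac : f z = (z - z₀) ^ (m z₀) * gg z₀ hz₀ z := hggf z₀ hz₀ z
        rw [hffac, hPfac, mul_div_mul_left _ _ (pow_ne_zero _ (sub_ne_zero.2 hzz₀))]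
    · have hdq : DifferentiableAt ℂ (fun z => f z / P z) z₀ :=
        (hf z₀).div (hPd z₀) (hPne z₀ hz₀)
      apply hdq.congr_of_eventuallyEq
      have hcl : IsClosed ((Z : Finset ℂ) : Set ℂ) := Z.finite_toSet.isClosed
      have hmem : z₀ ∈ (((Z : Finset ℂ) : Set ℂ))ᶜ := by simpa using hz₀
      filter_upwards [hcl.isOpen_compl.mem_nhds hmem] with z hzc
      have hzZ : z ∉ Z := by simpa using hzc
      simp only [hgdef, dif_neg hzZ]
  have hgs₀ : g s₀ ≠ 0 := hgne s₀ (by simp; positivity)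
  -- maximum modulus bound for g
  have hmax : ∀ z ∈ closedBall s₀ r, ‖g z‖ ≤ Real.exp M * ‖g s₀‖ := by
    have hcl : closure (ball s₀ r) = closedBall s₀ r := closure_ball s₀ hr.ne'
    intro z hz
    refine Complex.norm_le_of_forall_mem_frontier_norm_le isBounded_ball
      ⟨hgdiff.differentiableOn, hgdiff.continuous.continuousOn⟩ ?_ (hcl ▸ hz)
    rw [frontier_ball s₀ hr.ne']
    intro w hw
    have hwd : ‖w - s₀‖ = r := by rwa [mem_sphere, dist_eq_norm] at hw
    have hwZ : w ∉ Z := by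
      intro h
      have := ((hZ w).1 h).1
      rw [hwd] at this  -- impossible since this would say r ≤ r/2? careful: ‖w-s₀‖ = r ≤ r/2
      linarith
    simp only [hgdef, dif_neg hwZ, dif_neg hs₀notZ]
    rw [norm_div, norm_div]
    have hfw : ‖f w‖ ≤ Real.exp M * ‖f s₀‖ := by
      have := hbound w (le_of_eq hwd)
      rw [norm_div, div_lt_iff₀ (norm_pos_iff.2 hfs₀)] at this
      linarith
    have hPw : ‖P s₀‖ ≤ ‖P w‖ := by
      rw [hPdef]
      rw [norm_prod, norm_prod]
      apply Finset.prod_le_prod (fun ρ _ => by positivity)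
      intro ρ hρ
      rw [norm_pow, norm_pow]
      apply pow_le_pow_left₀ (norm_nonneg _)
      have h1 : ‖ρ - s₀‖ ≤ r / 2 := ((hZ ρ).1 hρ).1
      have h2 : ‖s₀ - ρ‖ ≤ r / 2 := by rwa [norm_sub_rev]
      have h3 : ‖w - s₀‖ ≤ ‖w - ρ‖ + ‖ρ - s₀‖ := by
        have := dist_triangle w ρ s₀
        simpa [dist_eq_norm] using this
      have : r / 2 ≤ ‖w - ρ‖ := by rw [hwd] at h3; linarith
      linarith
    have hPw0 : (0:ℝ) < ‖P s₀‖ := norm_pos_iff.2 (hPne s₀ hs₀notZ)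
    calc ‖f w‖ / ‖P w‖ ≤ (Real.exp M * ‖f s₀‖) / ‖P w‖ := by
          gcongr
      _ ≤ (Real.exp M * ‖f s₀‖) / ‖P s₀‖ := by gcongr
      _ = Real.exp M * (‖f s₀‖ / ‖P s₀‖) := by ring
  -- the logarithmic derivative of g
  set u : ℂ → ℂ := fun z => deriv g z / g z with hudef
  have hderivg : Differentiable ℂ (deriv g) := by
    have h1 : AnalyticOnNhd ℂ g univ := fun z _ => hgdiff.analyticAt z
    intro z
    exact (h1.deriv z (mem_univ z)).differentiableAt
  have hud : DifferentiableOn ℂ u (ball s₀ (r / 2)) := by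
    intro z hz
    have hz' : ‖z - s₀‖ ≤ r / 2 := by
      rw [mem_ball, dist_eq_norm] at hz; exact hz.le
    exact ((hderivg z).div (hgdiff z) (hgne z hz')).differentiableWithinAt
  obtain ⟨L, hL0, hLd⟩ := exists_primitive_aux (R₂ := 2 * r / 5) (R₃ := 9 * r / 20)
    hud (by linarith) (by linarith) (by linarith)
  have hball_ne : ∀ z ∈ ball s₀ (2 * r / 5), g z ≠ 0 := by
    intro z hz
    rw [mem_ball, dist_eq_norm] at hz
    exact hgne z (by linarith)
  -- g z * exp (-L z) is constant on the ball
  have hconst : ∀ z ∈ ball s₀ (2 * r / 5), g z * Complex.exp (-L z) = g s₀ := by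
    have hE : ∀ z ∈ ball s₀ (2 * r / 5),
        HasDerivAt (fun w => g w * Complex.exp (-L w)) 0 z := by
      intro z hz
      have h1 : HasDerivAt g (deriv g z) z := (hgdiff z).hasDerivAt
      have h2 : HasDerivAt (fun w => Complex.exp (-L w))
          (Complex.exp (-L z) * (-(u z))) z := ((hLd z hz).neg).cexp
      have h3 := h1.fun_mul h2
      refine h3.congr_deriv ?_
      rw [hudef]
      field_simp [hball_ne z hz]
      ring
    intro z hz
    have h0 : (0:ℝ) < 2 * r / 5 := by linarith
    have hkey := (convex_ball s₀ (2 * r / 5)).norm_image_sub_le_of_norm_hasFDerivWithin_le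
      (f := fun w => g w * Complex.exp (-L w))
      (f' := fun _ => ContinuousLinearMap.smulRight (1 : ℂ →L[ℂ] ℂ) (0:ℂ))
      (fun x hx => ((hE x hx).hasFDerivAt).hasFDerivWithinAt)
      (C := 0)
      (fun x _ => by simp) (mem_ball_self h0) hz
    have : g z * Complex.exp (-L z) = g s₀ * Complex.exp (-L s₀) := by
      have := hkey
      simp only [zero_mul] at this
      have h4 := norm_le_zero_iff.1 this
      have := sub_eq_zero.1 h4
      exact this
    rw [hL0, neg_zero, Complex.exp_zero, mul_one] at this
    exact this
  -- real part bound for L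
  have hre : ∀ z ∈ ball s₀ (2 * r / 5), (L z).re ≤ M := by
    intro z hz
    have h1 : Complex.exp (L z) = g z / g s₀ := by
      rw [eq_div_iff hgs₀, ← hconst z hz,
        show Complex.exp (L z) * (g z * Complex.exp (-L z))
          = g z * (Complex.exp (L z) * Complex.exp (-L z)) by ring,
        ← Complex.exp_add]
      simp
    have h2 : Real.exp ((L z).re) = ‖g z‖ / ‖g s₀‖ := by
      have := congrArg norm h1
      rwa [Complex.norm_exp, norm_div] at this
    have h3 : ‖g z‖ ≤ Real.exp M * ‖g s₀‖ := by
      apply hmax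
      rw [mem_closedBall, dist_eq_norm]
      rw [mem_ball, dist_eq_norm] at hz
      linarith
    have h4 : Real.exp ((L z).re) ≤ Real.exp M := by
      rw [h2, div_le_iff₀ (norm_pos_iff.2 hgs₀)]
      linarith [mul_comm (Real.exp M) ‖g s₀‖]
    exact Real.exp_le_exp.1 h4
  -- Borel-Caratheodory bound
  have hLb := bc_bound_aux (by linarith : (0:ℝ) < 2 * r / 5) hM
    (fun z hz => (hLd z hz).differentiableAt.differentiableWithinAt) hL0 hre
  have hLb' : ∀ z : ℂ, ‖z - s₀‖ < 3 * r / 10 → ‖L z‖ ≤ 12 * M := by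
    intro z hz
    apply hLb
    rw [mem_ball, dist_eq_norm]
    linarith
  -- derivative bound at s
  have hsub : ∀ z ∈ ball s (r / 20), z ∈ ball s₀ (2 * r / 5) ∧ ‖z - s₀‖ < 3 * r / 10 := by
    intro z hz
    rw [mem_ball, dist_eq_norm] at hz
    have h1 : ‖z - s₀‖ ≤ ‖z - s‖ + ‖s - s₀‖ := by
      have := dist_triangle z s s₀
      simpa [dist_eq_norm] using this
    constructor
    · rw [mem_ball, dist_eq_norm]; linarith
    · linarith
  have hLdiffball : DifferentiableOn ℂ L (ball s (r / 20)) := fun z hz =>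
    (hLd z (hsub z hz).1).differentiableAt.differentiableWithinAt
  have hsmem : ‖s - s₀‖ < 3 * r / 10 := by linarith
  have hmaps2 : MapsTo L (ball s (r / 20)) (ball (L s) (25 * M)) := by
    intro z hz
    rw [mem_ball, dist_eq_norm]
    have h1 : ‖L z - L s‖ ≤ ‖L z‖ + ‖L s‖ := norm_sub_le _ _
    have h2 := hLb' z (hsub z hz).2
    have h3 := hLb' s hsmem
    linarith
  have hderivb := Complex.norm_deriv_le_div_of_mapsTo_ball hLdiffball (hmaps2.mono_right ball_subset_closedBall)
    (by linarith : (0:ℝ) < r / 20)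
  have hderiveq : deriv L s = u s := by
    have hsball : s ∈ ball s₀ (2 * r / 5) := by
      rw [mem_ball, dist_eq_norm]; linarith
    exact (hLd s hsball).deriv
  have hus : ‖u s‖ ≤ 500 * M / r := by
    rw [← hderiveq]
    calc ‖deriv L s‖ ≤ 25 * M / (r / 20) := hderivb
      _ = 500 * M / r := by field_simp; ring
  -- logDeriv computation
  have hsnotZ : ∀ ρ ∈ Z, s ≠ ρ := by
    intro ρ hρ h
    exact hfs (h ▸ ((hZ ρ).1 hρ).2)
  have hPs : P s ≠ 0 := by
    rw [hPdef, Finset.prod_ne_zero_iff]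
    exact fun ρ hρ => pow_ne_zero _ (sub_ne_zero.2 (hsnotZ ρ hρ))
  have hgs : g s ≠ 0 := by
    intro h
    apply hfs
    rw [hfPg s, h, mul_zero]
  have hlog : logDeriv f s = (∑ ρ ∈ Z, (m ρ : ℂ) / (s - ρ)) + u s := by
    have hfeq : f = fun z => P z * g z := funext hfPg
    rw [hfeq, logDeriv_mul s hPs hgs (hPd s) (hgdiff s)]
    congr 1
    · have hPfun : P = ∏ ρ ∈ Z, (fun z => (z - ρ) ^ (m ρ)) := by
        funext z
        rw [hPdef, Finset.prod_apply]
      have h2 : ∀ ρ ∈ Z, DifferentiableAt ℂ (fun z : ℂ => (z - ρ) ^ (m ρ)) s :=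
        fun ρ _ => by fun_prop
      have hld := logDeriv_prod (s := Z) (f := fun ρ => fun z : ℂ => (z - ρ) ^ (m ρ)) (x := s)
        (fun ρ hρ => pow_ne_zero _ (sub_ne_zero.2 (hsnotZ ρ hρ))) h2
      calc logDeriv P s = ∑ ρ ∈ Z, logDeriv (fun z : ℂ => (z - ρ) ^ (m ρ)) s := hld
        _ = ∑ ρ ∈ Z, (m ρ : ℂ) / (s - ρ) := by
            apply Finset.sum_congr rfl
            intro ρ hρ
            rw [logDeriv_fun_pow (by fun_prop : DifferentiableAt ℂ (fun z : ℂ => z - ρ) s)]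
            have h3 : logDeriv (fun z : ℂ => z - ρ) s = 1 / (s - ρ) := by
              rw [logDeriv_apply, deriv_sub_const]
              simp
            rw [h3]
            ring
  rw [hlog, add_sub_cancel_left]
  exact hus
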